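/- Let ω : ℕ → ℝ be a function with ω(r) → ∞ as r → ∞, and for each r let p(r) = (log r − ω(r))/r, assuming p(r) ≥ 0. Let X be a random edge-subgraph of K_{r,r} drawn from G(K_{r,r}, p(r)). Then the probability that X is disconnected tends to 1 as r → ∞. -/

import Mathlib

open SimpleGraph

/-- The Bernoulli measure on `Bool` with success probability `p`. -/
noncomputable def bernoulliMeasure (p : ℝ) : MeasureTheory.Measure Bool :=
  ENNReal.ofReal p • MeasureTheory.Measure.dirac true +
    ENNReal.ofReal (1 - p) • MeasureTheory.Measure.dirac false

/-- The distribution `G(K_{r,r}, p)`: each of the `r * r` potential edges of the complete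
bipartite graph is present independently with probability `p`; outcomes are indexed by
functions recording the presence of each potential edge. -/
noncomputable def bipartiteRandomModel (r : ℕ) (p : ℝ) :
    MeasureTheory.Measure (Fin r × Fin r → Bool) :=
  MeasureTheory.Measure.pi fun _ => bernoulliMeasure p

/-- The edge-subgraph of `K_{r,r}` determined by an outcome `ω`. -/
def graphOf {r : ℕ} (ω : Fin r × Fin r → Bool) : SimpleGraph (Fin r ⊕ Fin r) :=
  SimpleGraph.fromRel (fun x y => ∃ i j, x = Sum.inl i ∧ y = Sum.inr j ∧ ω (i, j) = true)

open MeasureTheory Filter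

lemma bern_false {p : ℝ} (h1 : p ≤ 1) : bernoulliMeasure p {false} = ENNReal.ofReal (1 - p) := by
  simp [bernoulliMeasure, Measure.dirac_apply]

lemma bern_prob {p : ℝ} (h0 : 0 ≤ p) (h1 : p ≤ 1) : IsProbabilityMeasure (bernoulliMeasure p) := by
  constructor
  simp only [bernoulliMeasure, Measure.add_apply, Measure.smul_apply, Measure.dirac_apply,
    Set.mem_univ, Set.indicator_of_mem, Pi.one_apply, smul_eq_mul, mul_one]
  rw [← ENNReal.ofReal_add h0 (by linarith), ← ENNReal.ofReal_one]
  norm_num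

lemma uncurry_measurable (r : ℕ) :
    Measurable (fun (f : Fin r → Fin r → Bool) (ij : Fin r × Fin r) => f ij.1 ij.2) :=
  measurable_pi_lambda _ fun ij => (measurable_pi_apply ij.2).comp (measurable_pi_apply ij.1)

lemma model_eq_map (r : ℕ) (p : ℝ) (h0 : 0 ≤ p) (h1 : p ≤ 1) :
    bipartiteRandomModel r p =
      Measure.map (fun (f : Fin r → Fin r → Bool) (ij : Fin r × Fin r) => f ij.1 ij.2)
        (Measure.pi fun _ : Fin r => Measure.pi fun _ : Fin r => bernoulliMeasure p) := by
  haveI := bern_prob h0 h1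
  refine Measure.pi_eq fun s hs => ?_
  rw [Measure.map_apply (uncurry_measurable r) (MeasurableSet.univ_pi hs)]
  have hpre : (fun (f : Fin r → Fin r → Bool) (ij : Fin r × Fin r) => f ij.1 ij.2) ⁻¹'
      (Set.univ.pi s) = Set.univ.pi (fun i => Set.univ.pi fun j => s (i, j)) := by
    ext f
    simp [Set.mem_pi, Prod.forall]
  rw [hpre, Measure.pi_pi]
  simp_rw [Measure.pi_pi]
  rw [Fintype.prod_prod_type]

lemma key_measure (r : ℕ) (p : ℝ) (h0 : 0 ≤ p) (h1 : p ≤ 1) :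
    bipartiteRandomModel r p {ω : Fin r × Fin r → Bool | ∀ i, ∃ j, ω (i, j) = true}
      = (1 - ENNReal.ofReal ((1 - p) ^ r)) ^ r := by
  haveI := bern_prob h0 h1
  have hT : MeasurableSet {g : Fin r → Bool | ∃ j, g j = true} := by
    have : {g : Fin r → Bool | ∃ j, g j = true} = ⋃ j, (fun g => g j) ⁻¹' {true} := by
      ext g; simp
    rw [this]
    exact MeasurableSet.iUnion fun j => measurable_pi_apply j (measurableSet_singleton true)
  have hB : MeasurableSet {ω : Fin r × Fin r → Bool | ∀ i, ∃ j, ω (i, j) = true} := by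
    have : {ω : Fin r × Fin r → Bool | ∀ i, ∃ j, ω (i, j) = true}
        = ⋂ i, ⋃ j, (fun ω => ω (i, j)) ⁻¹' {true} := by ext ω; simp
    rw [this]
    exact MeasurableSet.iInter fun i => MeasurableSet.iUnion fun j =>
      measurable_pi_apply (i, j) (measurableSet_singleton true)
  rw [model_eq_map r p h0 h1, Measure.map_apply (uncurry_measurable r) hB]
  have hpre : (fun (f : Fin r → Fin r → Bool) (ij : Fin r × Fin r) => f ij.1 ij.2) ⁻¹'
      {ω : Fin r × Fin r → Bool | ∀ i, ∃ j, ω (i, j) = true}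
      = Set.univ.pi (fun _ : Fin r => {g : Fin r → Bool | ∃ j, g j = true}) := by
    ext f; simp
  rw [hpre, Measure.pi_pi, Finset.prod_const, Finset.card_univ, Fintype.card_fin]
  congr 1
  -- row measure
  have hS : {g : Fin r → Bool | ∃ j, g j = true}
      = (Set.univ.pi fun _ : Fin r => ({false} : Set Bool))ᶜ := by
    ext g
    simp [Set.mem_pi, not_forall, Bool.not_eq_false]
  rw [hS, measure_compl (MeasurableSet.univ_pi fun _ => measurableSet_singleton false)
    (measure_ne_top _ _), Measure.pi_pi]
  haveI : IsProbabilityMeasure (Measure.pi fun _ : Fin r => bernoulliMeasure p) := by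
    infer_instance
  rw [measure_univ]
  simp [bern_false h1, Finset.prod_const, ENNReal.ofReal_pow (by linarith : (0:ℝ) ≤ 1 - p)]

lemma isolated_not_connected {r : ℕ} (hr : 0 < r) (ω : Fin r × Fin r → Bool) (i : Fin r)
    (hi : ∀ j, ω (i, j) = false) : ¬ (graphOf ω).Connected := by
  intro hc
  have hreach := hc.preconnected (Sum.inl i) (Sum.inr ⟨0, hr⟩)
  obtain ⟨W⟩ := hreach
  have hne : (Sum.inl i : Fin r ⊕ Fin r) ≠ Sum.inr ⟨0, hr⟩ := by simp
  have hadj := SimpleGraph.Walk.adj_snd (SimpleGraph.Walk.not_nil_of_ne hne) (p := W)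
  simp only [graphOf, SimpleGraph.fromRel_adj] at hadj
  obtain ⟨-, h | h⟩ := hadj
  · obtain ⟨i', j, hii, -, hω⟩ := h
    rw [Sum.inl.injEq] at hii
    subst hii
    rw [hi j] at hω
    exact Bool.false_ne_true hω
  · obtain ⟨i', j, -, hii, -⟩ := h
    exact (Sum.inl_ne_inr hii).elim
lemma log_div_tendsto : Tendsto (fun r : ℕ => Real.log r / r) atTop (nhds 0) := by
  have h := Real.tendsto_pow_log_div_mul_add_atTop 1 0 1 one_ne_zero
  have := h.comp (tendsto_natCast_atTop_atTop (R := ℝ))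
  simpa [Function.comp_def] using this

lemma log_sq_div_tendsto : Tendsto (fun r : ℕ => Real.log r ^ 2 / r) atTop (nhds 0) := by
  have h := Real.tendsto_pow_log_div_mul_add_atTop 1 0 2 one_ne_zero
  have := h.comp (tendsto_natCast_atTop_atTop (R := ℝ))
  simpa [Function.comp_def] using this

lemma regime (w : ℕ → ℝ) (hw : Tendsto w atTop atTop) :
    ∀ᶠ r : ℕ in atTop, 1 ≤ r ∧ 0 ≤ w r ∧ Real.log r / r ≤ 1 / 2 := by
  filter_upwards [eventually_ge_atTop 1, hw.eventually_ge_atTop 0,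
    log_div_tendsto.eventually (eventually_le_nhds (by norm_num : (0:ℝ) < 1/2))] with r h1 h2 h3
  exact ⟨h1, h2, h3⟩

lemma p_le_half (w p : ℕ → ℝ) (hp : ∀ r : ℕ, p r = (Real.log r - w r) / r)
    {r : ℕ} (h1 : 1 ≤ r) (h2 : 0 ≤ w r) (h3 : Real.log r / r ≤ 1 / 2) : p r ≤ 1 / 2 := by
  have hn0 : (0:ℝ) < r := by exact_mod_cast h1
  refine le_trans ?_ h3
  rw [hp]
  gcongr
  linarith

lemma creal_tendsto (w : ℕ → ℝ) (hw : Tendsto w atTop atTop)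
    (p : ℕ → ℝ) (hp : ∀ r : ℕ, p r = (Real.log r - w r) / r)
    (hp0 : ∀ r : ℕ, 0 ≤ p r) :
    Tendsto (fun r : ℕ => (1 - (1 - p r) ^ r) ^ r) atTop (nhds 0) := by
  have hd : Tendsto (fun r : ℕ => w r - 2 * (Real.log r ^ 2 / r)) atTop atTop := by
    have h := hw.atTop_add (log_sq_div_tendsto.const_mul (-2))
    simpa [sub_eq_add_neg, neg_mul] using h
  have hupper : Tendsto (fun r : ℕ =>
      Real.exp (-Real.exp (w r - 2 * (Real.log r ^ 2 / r)))) atTop (nhds 0) :=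
    Real.tendsto_exp_atBot.comp ((tendsto_neg_atTop_atBot).comp (Real.tendsto_exp_atTop.comp hd))
  refine tendsto_of_tendsto_of_tendsto_of_le_of_le' tendsto_const_nhds hupper ?_ ?_
  · filter_upwards [regime w hw] with r ⟨h1, h2, h3⟩
    have hxhalf := p_le_half w p hp h1 h2 h3
    have hx0 := hp0 r
    have hq0 : (0:ℝ) ≤ (1 - p r) ^ r := pow_nonneg (by linarith) r
    have hq1 : (1 - p r) ^ r ≤ 1 := pow_le_one₀ (by linarith) (by linarith)
    exact pow_nonneg (by linarith) r
  · filter_upwards [regime w hw] with r ⟨h1, h2, h3⟩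
    set x := p r with hxdef
    have hn0 : (0:ℝ) < r := by exact_mod_cast h1
    have hn1 : (1:ℝ) ≤ r := by exact_mod_cast h1
    have hx0 : 0 ≤ x := hp0 r
    have hxhalf : x ≤ 1 / 2 := p_le_half w p hp h1 h2 h3
    have h1x : (0:ℝ) < 1 - x := by linarith
    have hlogn0 : 0 ≤ Real.log r := Real.log_nonneg hn1
    have hrx : (r:ℝ) * x = Real.log r - w r := by
      rw [hxdef, hp]; field_simp
    have hrx0 : (0:ℝ) ≤ Real.log r - w r := by
      rw [← hrx]; positivity
    have hxle : x ≤ Real.log r / r := by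
      rw [hxdef, hp]; gcongr; linarith
    -- exp(-(x/(1-x))) ≤ 1 - x
    have e1 : Real.exp (-(x / (1 - x))) ≤ 1 - x := by
      have h := Real.add_one_le_exp (x / (1 - x))
      have hinv : (1 - x)⁻¹ ≤ Real.exp (x / (1 - x)) := by
        have h2 : x / (1 - x) + 1 = (1 - x)⁻¹ := by field_simp; ring
        linarith [h, h2.ge, h2.le]
      rw [Real.exp_neg]
      calc (Real.exp (x / (1 - x)))⁻¹ ≤ ((1 - x)⁻¹)⁻¹ := by
            exact inv_anti₀ (by positivity) hinv
        _ = 1 - x := inv_inv _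
    -- exp(-(r*(x/(1-x)))) ≤ (1-x)^r
    have e2 : Real.exp (-((r:ℝ) * (x / (1 - x)))) ≤ (1 - x) ^ r := by
      have h := pow_le_pow_left₀ (Real.exp_nonneg _) e1 r
      rwa [← Real.exp_nat_mul, mul_neg] at h
    -- key bound on the exponent
    have hinv2 : 1 / (1 - x) ≤ 1 + 2 * x := by
      rw [div_le_iff₀ h1x]; nlinarith
    have key : (r:ℝ) * (x / (1 - x)) ≤ (Real.log r - w r) + 2 * (Real.log r ^ 2 / r) := by
      have step1 : (r:ℝ) * (x / (1 - x)) = (Real.log r - w r) * (1 / (1 - x)) := by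
        rw [← hrx]; field_simp
      rw [step1]
      calc (Real.log r - w r) * (1 / (1 - x)) ≤ (Real.log r - w r) * (1 + 2 * x) :=
            mul_le_mul_of_nonneg_left hinv2 hrx0
        _ = (Real.log r - w r) + 2 * (x * (Real.log r - w r)) := by ring
        _ ≤ (Real.log r - w r) + 2 * (Real.log r ^ 2 / r) := by
            gcongr
            calc x * (Real.log r - w r) ≤ (Real.log r / r) * Real.log r := by
                  apply mul_le_mul hxle (by linarith) hrx0 (by positivity)
              _ = Real.log r ^ 2 / r := by ring
    -- exp(d) ≤ r * (1-x)^r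
    have e4 : Real.exp (w r - 2 * (Real.log r ^ 2 / r)) ≤ (r:ℝ) * (1 - x) ^ r := by
      have hexp : Real.exp (w r - 2 * (Real.log r ^ 2 / r))
          = (r:ℝ) * Real.exp (-((Real.log r - w r) + 2 * (Real.log r ^ 2 / r))) := by
        calc Real.exp (w r - 2 * (Real.log r ^ 2 / r))
            = Real.exp (Real.log r) *
              Real.exp (-((Real.log r - w r) + 2 * (Real.log r ^ 2 / r))) := by
              rw [← Real.exp_add]; congr 1; ring
          _ = (r:ℝ) * Real.exp (-((Real.log r - w r) + 2 * (Real.log r ^ 2 / r))) := by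
              rw [Real.exp_log hn0]
      rw [hexp]
      have := (Real.exp_le_exp.2 (neg_le_neg key)).trans e2
      exact mul_le_mul_of_nonneg_left this hn0.le
    -- final chain
    have hq0 : (0:ℝ) ≤ (1 - x) ^ r := by positivity
    have hq1 : (1 - x) ^ r ≤ 1 := pow_le_one₀ h1x.le (by linarith)
    have e5 : (1 - (1 - x) ^ r) ^ r ≤ Real.exp (-((1 - x) ^ r)) ^ r := by
      apply pow_le_pow_left₀ (by linarith)
      have := Real.add_one_le_exp (-((1 - x) ^ r))
      linarith
    calc (1 - (1 - x) ^ r) ^ r ≤ Real.exp (-((1 - x) ^ r)) ^ r := e5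
      _ = Real.exp (-((r:ℝ) * (1 - x) ^ r)) := by rw [← Real.exp_nat_mul, mul_neg]
      _ ≤ Real.exp (-Real.exp (w r - 2 * (Real.log r ^ 2 / r))) :=
          Real.exp_le_exp.2 (neg_le_neg e4)

lemma measB (r : ℕ) :
    MeasurableSet {ω : Fin r × Fin r → Bool | ∀ i, ∃ j, ω (i, j) = true} := by
  have : {ω : Fin r × Fin r → Bool | ∀ i, ∃ j, ω (i, j) = true}
      = ⋂ i, ⋃ j, (fun ω => ω (i, j)) ⁻¹' {true} := by ext ω; simp
  rw [this]
  exact MeasurableSet.iInter fun i => MeasurableSet.iUnion fun j =>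
    measurable_pi_apply (i, j) (measurableSet_singleton true)

theorem stmt11 (w : ℕ → ℝ) (hw : Filter.Tendsto w Filter.atTop Filter.atTop)
    (p : ℕ → ℝ) (hp : ∀ r : ℕ, p r = (Real.log r - w r) / r)
    (hp0 : ∀ r : ℕ, 0 ≤ p r) :
    Filter.Tendsto
      (fun r : ℕ => bipartiteRandomModel r (p r) {ω | ¬ (graphOf ω).Connected})
      Filter.atTop (nhds 1) := by
  have hc := creal_tendsto w hw p hp hp0
  have hof : Tendsto (fun r : ℕ => ENNReal.ofReal ((1 - (1 - p r) ^ r) ^ r)) atTop (nhds 0) := by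
    simpa using ENNReal.tendsto_ofReal hc
  have hlow : Tendsto (fun r : ℕ => 1 - ENNReal.ofReal ((1 - (1 - p r) ^ r) ^ r))
      atTop (nhds 1) := by
    have h := ENNReal.Tendsto.sub (tendsto_const_nhds (x := (1 : ENNReal))) hof
      (Or.inl ENNReal.one_ne_top)
    simpa using h
  refine tendsto_of_tendsto_of_tendsto_of_le_of_le' hlow tendsto_const_nhds ?_ ?_
  · filter_upwards [regime w hw] with r ⟨h1, h2, h3⟩
    have hx0 := hp0 r
    have hxhalf := p_le_half w p hp h1 h2 h3
    have hx1 : p r ≤ 1 := by linarith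
    haveI := bern_prob hx0 hx1
    haveI : IsProbabilityMeasure (bipartiteRandomModel r (p r)) := by
      unfold bipartiteRandomModel; infer_instance
    have hsub : {ω : Fin r × Fin r → Bool | ∀ i, ∃ j, ω (i, j) = true}ᶜ
        ⊆ {ω | ¬ (graphOf ω).Connected} := by
      intro ω hω
      simp only [Set.mem_compl_iff, Set.mem_setOf_eq, not_forall] at hω
      obtain ⟨i, hi⟩ := hω
      push_neg at hi
      exact isolated_not_connected (by omega) ω i
        (fun j => by simpa [Bool.not_eq_true] using hi j)
    have hm : bipartiteRandomModel r (p r)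
          {ω : Fin r × Fin r → Bool | ∀ i, ∃ j, ω (i, j) = true}ᶜ
        = 1 - (1 - ENNReal.ofReal ((1 - p r) ^ r)) ^ r := by
      rw [measure_compl (measB r) (measure_ne_top _ _), measure_univ,
        key_measure r (p r) hx0 hx1]
    have hu0 : (0:ℝ) ≤ (1 - p r) ^ r := pow_nonneg (by linarith) r
    have hu1 : (1 - p r) ^ r ≤ 1 := pow_le_one₀ (by linarith) (by linarith)
    have hrw : (1 - ENNReal.ofReal ((1 - p r) ^ r)) ^ r
        = ENNReal.ofReal ((1 - (1 - p r) ^ r) ^ r) := by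
      have h2 : (1 : ENNReal) - ENNReal.ofReal ((1 - p r) ^ r)
          = ENNReal.ofReal (1 - (1 - p r) ^ r) := by
        rw [← ENNReal.ofReal_one, ← ENNReal.ofReal_sub _ hu0]
      rw [h2, ← ENNReal.ofReal_pow (by linarith) r]
    calc 1 - ENNReal.ofReal ((1 - (1 - p r) ^ r) ^ r)
        = bipartiteRandomModel r (p r)
            {ω : Fin r × Fin r → Bool | ∀ i, ∃ j, ω (i, j) = true}ᶜ := by rw [hm, hrw]
      _ ≤ bipartiteRandomModel r (p r) {ω | ¬ (graphOf ω).Connected} := measure_mono hsub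
  · filter_upwards [regime w hw] with r ⟨h1, h2, h3⟩
    have hx0 := hp0 r
    have hxhalf := p_le_half w p hp h1 h2 h3
    haveI := bern_prob hx0 (by linarith)
    haveI : IsProbabilityMeasure (bipartiteRandomModel r (p r)) := by
      unfold bipartiteRandomModel; infer_instance
    exact prob_le_one
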